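/- arXiv:math/0401269 — 2 statements merged into one kernel-verified Lean document; each statement's English description precedes it below -/
import Mathlib

section
/- Let u = x_1^2 x_2^{ℓ} be the cyclic word in F_2 with ℓ ≥ 1. Then the set Λ(u) has cardinality |u| − 1 = ℓ + 1. -/
/-- The free group of rank `n`. -/
abbrev FG (n : ℕ) := FreeGroup (Fin n)

/-- Cyclic words in `F_n`, i.e. conjugacy classes. -/
abbrev CW (n : ℕ) := ConjClasses (FG n)

/-- The (reduced) word length of an element of the free group. -/
def wlen {n : ℕ} (g : FG n) : ℕ := g.toWord.length

/-- The length of a cyclic word: the minimal word length over the conjugacy class. -/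
noncomputable def cwLen {n : ℕ} (c : CW n) : ℕ :=
  sInf (wlen '' {g | ConjClasses.mk g = c})

/-- The automorphic orbit of a cyclic word. -/
def orb {n : ℕ} (u : CW n) : Set (CW n) :=
  {v | ∃ φ : FG n ≃* FG n, ConjClasses.map (φ : FG n →* FG n) u = v}

/-- `N(u)`: the number of cyclic words in the orbit of `u` having the same length as `u`. -/
noncomputable def Ncount {n : ℕ} (u : CW n) : ℕ :=
  Set.ncard {v | v ∈ orb u ∧ cwLen v = cwLen u}

/-- The total number of occurrences of `x_i^{±1}` in (the reduced word of) `g`. -/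
def occ {n : ℕ} (g : FG n) (i : Fin n) : ℕ := (g.toWord.map Prod.fst).count i

/-- The total number of occurrences of `x_i^{±1}` in a cyclic word, read off from a
minimal-length representative. -/
noncomputable def occCW {n : ℕ} (u : CW n) (i : Fin n) : ℕ :=
  sInf ((fun g => occ g i) '' {g | ConjClasses.mk g = u ∧ wlen g = cwLen u})

/-- Hypothesis 1.1: (i) `u` has minimal length in its automorphic orbit; (ii) if
`x_i^{±1}` and `x_j^{±1}` (`i < j`) both occur in `u`, then `x_i^{±1}` occurs strictly
fewer times than `x_j^{±1}`. -/
def Hyp {n : ℕ} (u : CW n) : Prop :=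
  (∀ v ∈ orb u, cwLen u ≤ cwLen v) ∧
  (∀ i j : Fin n, i < j → occCW u i ≠ 0 → occCW u j ≠ 0 → occCW u i < occCW u j)

/-- The element of the free group corresponding to a letter in `Σ`. -/
def lett {n : ℕ} (p : Fin n × Bool) : FG n := cond p.2 (FreeGroup.of p.1) (FreeGroup.of p.1)⁻¹

/-- The endomorphism of `F_n` determined by the Whitehead data `(A, a)`:
`x ↦ xa` if `x ∈ A, x⁻¹ ∉ A`; `x ↦ a⁻¹xa` if `x, x⁻¹ ∈ A`; `x ↦ x` otherwise. -/
def wmap {n : ℕ} (A : Finset (Fin n × Bool)) (a : Fin n × Bool) : FG n →* FG n :=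
  FreeGroup.lift (fun i =>
    if (i, true) ∈ A then
      (if (i, false) ∈ A then (lett a)⁻¹ * FreeGroup.of i * lett a
       else FreeGroup.of i * lett a)
    else
      (if (i, false) ∈ A then (lett a)⁻¹ * FreeGroup.of i
       else FreeGroup.of i))

/-- The degree of the Whitehead data `A`: the largest (1-based) index `i` such that
exactly one of `x_i, x_i⁻¹` lies in `A`, or `0` if there is no such index. -/
def wdeg {n : ℕ} (A : Finset (Fin n × Bool)) : ℕ :=
  (Finset.univ.filter (fun i : Fin n =>
      ((i, true) ∈ A ∧ (i, false) ∉ A) ∨ ((i, false) ∈ A ∧ (i, true) ∉ A))).sup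
    (fun i => (i : ℕ) + 1)

/-- A Whitehead automorphism of the second type, subject to the Section 2 convention
that the multiplier `a = x_j^{±1}` satisfies `j > deg`. -/
structure Wh (n : ℕ) where
  A : Finset (Fin n × Bool)
  a : Fin n × Bool
  mem : a ∉ A
  invMem : (a.1, !a.2) ∉ A
  conv : wdeg A ≤ (a.1 : ℕ)

def Wh.deg {n : ℕ} (σ : Wh n) : ℕ := wdeg σ.A

/-- Action of a Whitehead automorphism on cyclic words. -/
def Wh.act {n : ℕ} (σ : Wh n) (c : CW n) : CW n := ConjClasses.map (wmap σ.A σ.a) c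

/-- Apply a list of Whitehead automorphisms, leftmost first. -/
def applyList {n : ℕ} (L : List (Wh n)) (c : CW n) : CW n := L.foldl (fun c σ => σ.act c) c

/-- `Ω_k(v)`: cyclic words obtained from `v` by a nonempty composition `α_t ⋯ α_1` of
Whitehead automorphisms of the second type with `k = deg α_t ≥ ⋯ ≥ deg α_1` which
preserves the length of `v` at every stage. -/
def Omega {n : ℕ} (k : ℕ) (v : CW n) : Set (CW n) :=
  {w | ∃ L : List (Wh n), L ≠ [] ∧
        (L.map Wh.deg).Chain' (· ≤ ·) ∧
        (L.map Wh.deg).getLast? = some k ∧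
        (∀ m : ℕ, 1 ≤ m → m ≤ L.length → cwLen (applyList (L.take m) v) = cwLen v) ∧
        w = applyList L v}

/-- `M_k(v)`: the cardinality of `Ω_k(v)`. -/
noncomputable def Mcount {n : ℕ} (k : ℕ) (v : CW n) : ℕ := (Omega k v).ncard

/-- `x_k` (1-based indexing) as an element of `F_n`; junk value `1` out of range. -/
def gen (n k : ℕ) : FG n := if h : k - 1 < n then FreeGroup.of ⟨k - 1, h⟩ else 1

/-- The word `u = x_1^2 x_2 (x_2 x_n x_2⁻¹ x_n) x_2 x_3 (x_3 x_n x_3⁻¹ x_n)^2 x_3 ⋯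
x_{n-1} (x_{n-1} x_n x_{n-1}⁻¹ x_n)^{n-2} x_{n-1} x_n^ℓ` of Section 4. -/
def uWord (n ℓ : ℕ) : FG n :=
  (gen n 1) ^ 2 *
    ((List.range (n - 2)).map (fun j =>
        gen n (j + 2) *
          (gen n (j + 2) * gen n n * (gen n (j + 2))⁻¹ * gen n n) ^ (j + 1) *
          gen n (j + 2))).prod *
    (gen n n) ^ ℓ

/-- The Whitehead automorphism `({x_1}, x_2^{±1})` of `F_2` (`b = true` for `x_2`). -/
def tau2 (b : Bool) : FG 2 →* FG 2 := wmap {((0 : Fin 2), true)} ((1 : Fin 2), b)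

/-- `Λ(u)`: cyclic words of the form `τ^k(u)` where `τ` is `({x_1}, x_2)` or
`({x_1}, x_2⁻¹)` and the length of `u` is preserved at every stage. -/
def Lam (u : CW 2) : Set (CW 2) :=
  {v | ∃ b : Bool, ∃ k : ℕ, v = (ConjClasses.map (tau2 b))^[k] u ∧
        ∀ i : ℕ, 1 ≤ i → i ≤ k → cwLen ((ConjClasses.map (tau2 b))^[i] u) = cwLen u}


section AuxWhitehead
open FreeGroup List
set_option linter.unusedSectionVars false
set_option maxHeartbeats 1000000

variable {α : Type*} [DecidableEq α]

def NC (a b : α × Bool) : Prop := ¬(a.1 = b.1 ∧ a.2 = !b.2)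

def CRed (w : List (α × Bool)) : Prop :=
  w.Chain' NC ∧ ∀ a ∈ w.getLast?, ∀ b ∈ w.head?, NC a b

lemma NC_self (a : α × Bool) : NC a a := by simp [NC]

lemma reduce_eq_self {L : List (α × Bool)} (h : L.Chain' NC) : reduce L = L := by
  induction L with
  | nil => rfl
  | cons x L ih =>
    have h' := h.tail
    rw [reduce.cons, ih h']
    cases L with
    | nil => rfl
    | cons hd tl =>
      have : NC x hd := List.isChain_cons_cons.mp h |>.1
      simp only [NC] at this
      simp [this]

lemma chain'_reduce (L : List (α × Bool)) : (reduce L).Chain' NC := by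
  induction L with
  | nil => exact List.isChain_nil
  | cons x L ih =>
    rw [reduce.cons]
    cases hL : reduce L with
    | nil => exact List.isChain_singleton _
    | cons hd tl =>
      rw [hL] at ih
      by_cases hc : x.1 = hd.1 ∧ x.2 = !hd.2
      · simpa [hc, List.Chain'] using ih.tail
      · simp only [hc, if_false]
        exact List.isChain_cons_cons.mpr ⟨hc, ih⟩

lemma toWord_mk_eq {L : List (α × Bool)} (h : L.Chain' NC) : (FreeGroup.mk L).toWord = L := by
  rw [toWord_mk, reduce_eq_self h]

lemma chain'_toWord (g : FreeGroup α) : g.toWord.Chain' NC := by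
  rw [← reduce_toWord]; exact chain'_reduce _

lemma chain'_invRev {L : List (α × Bool)} (h : L.Chain' NC) : (invRev L).Chain' NC := by
  simp only [List.Chain'] at h ⊢
  rw [invRev, List.isChain_reverse, List.isChain_map]
  refine h.imp ?_
  rintro ⟨a1, a2⟩ ⟨b1, b2⟩ hab
  simp only [NC, not_and] at hab
  rintro ⟨e, h2⟩
  have h3 : a2 = !b2 := by simpa using h2.symm
  exact hab e.symm h3

lemma invRev_append' (L1 L2 : List (α × Bool)) : invRev (L1 ++ L2) = invRev L2 ++ invRev L1 := by
  simp [invRev]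

lemma invRev_concat (L : List (α × Bool)) (x : α × Bool) :
    invRev (L ++ [x]) = (x.1, !x.2) :: invRev L := by
  simp [invRev]

-- rotation lemmas
lemma CRed.rotate_front {h : α × Bool} {t : List (α × Bool)} (hw : CRed (h :: t)) :
    CRed (t ++ [h]) := by
  obtain ⟨hc, he⟩ := hw
  rcases t with _ | ⟨a, t'⟩
  · exact ⟨List.isChain_singleton h, by simpa using NC_self h⟩
  · constructor
    · refine List.isChain_append.mpr ⟨hc.tail, List.isChain_singleton h, ?_⟩
      intro x hx y hy
      simp only [List.head?_cons, Option.mem_def, Option.some_inj] at hy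
      subst hy
      exact he x (by simpa [List.getLast?_cons_cons] using hx) h rfl
    · intro x hx y hy
      have hx' : h = x := by
        rw [show a :: t' ++ [h] = (a :: t') ++ [h] from rfl, List.getLast?_concat] at hx
        exact Option.some_inj.mp hx
      have hy' : a = y := by simpa using hy
      subst hx'; subst hy'
      exact (List.isChain_cons_cons.mp hc).1


lemma CRed.rotate_back {l : List (α × Bool)} {x : α × Bool} (hw : CRed (l ++ [x])) :
    CRed (x :: l) := by
  obtain ⟨hc, he⟩ := hw
  rcases l with _ | ⟨a, l'⟩
  · exact ⟨List.isChain_singleton x, by simpa using NC_self x⟩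
  · obtain ⟨hc1, _, hc3⟩ := List.isChain_append.mp (hc : ((a :: l') ++ [x]).Chain' NC)
    constructor
    · refine List.isChain_cons_cons.mpr ⟨?_, hc1⟩
      have := he x (by rw [List.getLast?_concat]; rfl) a (by simp)
      exact this
    · intro p hp q hq
      have hq' : x = q := by simpa using hq
      subst hq'
      have hp' : p ∈ (a :: l').getLast? := by
        simpa [List.getLast?_cons_cons] using hp
      exact hc3 p hp' x (by simp)

theorem conj_ge (n : ℕ) : ∀ (c : FreeGroup α) (w : List (α × Bool)),
    c.toWord.length = n → CRed w →
    w.length ≤ (c * FreeGroup.mk w * c⁻¹).toWord.length := by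
  induction n using Nat.strong_induction_on with
  | _ n ih =>
  intro c w hn hw
  rcases eq_or_ne w [] with rfl | hwne
  · simp
  rcases List.eq_nil_or_concat' c.toWord with hD | ⟨D₀, x, hD⟩
  · have hc1 : c = 1 := toWord_eq_nil_iff.mp hD
    subst hc1
    rw [one_mul, inv_one, mul_one, toWord_mk_eq hw.1]
  · obtain ⟨h, t, rfl⟩ := List.exists_cons_of_ne_nil hwne
    have hchD : (D₀ ++ [x]).Chain' NC := hD ▸ chain'_toWord c
    have hchD₀ : D₀.Chain' NC := (List.isChain_append.mp hchD).1
    have hlen' := congrArg List.length hD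
    simp only [List.length_append, List.length_cons, List.length_nil] at hlen'
    have hclt : D₀.length < n := by omega
    have hceq : c = FreeGroup.mk D₀ * FreeGroup.mk [x] := by
      rw [mul_mk, ← hD, mk_toWord]
    have hinvx : (FreeGroup.mk [x] : FreeGroup α)⁻¹ = FreeGroup.mk [(x.1, !x.2)] := by
      rw [inv_mk]; rfl
    by_cases hfront : h = (x.1, !x.2)
    · -- front cancellation
      subst hfront
      have inner : FreeGroup.mk [x] * FreeGroup.mk ((x.1, !x.2) :: t) *
          FreeGroup.mk [(x.1, !x.2)] = FreeGroup.mk (t ++ [(x.1, !x.2)]) := by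
        rw [mul_mk, mul_mk]
        have he : ([x] ++ (x.1, !x.2) :: t) ++ [(x.1, !x.2)]
            = [] ++ (x.1, x.2) :: (x.1, !x.2) :: (t ++ [(x.1, !x.2)]) := by simp
        rw [he]
        exact Quot.sound (FreeGroup.Red.Step.not)
      have key : c * FreeGroup.mk ((x.1, !x.2) :: t) * c⁻¹
          = FreeGroup.mk D₀ * FreeGroup.mk (t ++ [(x.1, !x.2)]) * (FreeGroup.mk D₀)⁻¹ := by
        rw [← inner, hceq, mul_inv_rev, hinvx]
        group
      have hlen := ih D₀.length hclt (FreeGroup.mk D₀) (t ++ [(x.1, !x.2)])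
        (by rw [toWord_mk_eq hchD₀]) hw.rotate_front
      rw [key]
      simpa using hlen
    · by_cases hback : (h :: t).getLast? = some x
      · -- back cancellation
        have hne : h :: t ≠ [] := by simp
        have hsplit : h :: t = (h :: t).dropLast ++ [x] := by
          conv_lhs => rw [← List.dropLast_append_getLast hne]
          rw [List.getLast?_eq_getLast hne, Option.some_inj] at hback
          rw [hback]
        have inner : FreeGroup.mk [x] * FreeGroup.mk (h :: t) *
            FreeGroup.mk [(x.1, !x.2)] = FreeGroup.mk (x :: (h :: t).dropLast) := by
          rw [mul_mk, mul_mk]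
          have he : ([x] ++ (h :: t)) ++ [(x.1, !x.2)]
              = (x :: (h :: t).dropLast) ++ (x.1, x.2) :: (x.1, !x.2) :: [] := by
            conv_lhs => rw [hsplit]
            simp
          rw [he]
          have := Quot.sound (FreeGroup.Red.Step.not
            (L₁ := x :: (h :: t).dropLast) (L₂ := ([] : List (α × Bool)))
            (x := x.1) (b := x.2))
          rw [List.append_nil] at this
          exact this
        have key : c * FreeGroup.mk (h :: t) * c⁻¹
            = FreeGroup.mk D₀ * FreeGroup.mk (x :: (h :: t).dropLast) * (FreeGroup.mk D₀)⁻¹ := by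
          rw [← inner, hceq, mul_inv_rev, hinvx]
          group
        have hcr : CRed (x :: (h :: t).dropLast) := by
          apply CRed.rotate_back
          rw [← hsplit]; exact hw
        have hlen := ih D₀.length hclt (FreeGroup.mk D₀) (x :: (h :: t).dropLast)
          (by rw [toWord_mk_eq hchD₀]) hcr
        rw [key]
        have hdl : (h :: t).dropLast.length = t.length := by simp
        simp only [List.length_append, List.length_cons, List.length_nil, hdl] at hlen ⊢
        omega
      · -- no cancellation
        have hbig : c * FreeGroup.mk (h :: t) * c⁻¹
            = FreeGroup.mk (c.toWord ++ (h :: t) ++ invRev c.toWord) := by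
          conv_lhs => rw [← mk_toWord (x := c)]
          rw [inv_mk, mul_mk, mul_mk]
        have hch : (c.toWord ++ ((h :: t) ++ invRev c.toWord)).Chain' NC := by
          refine List.isChain_append.mpr ⟨chain'_toWord c, ?_, ?_⟩
          · refine List.isChain_append.mpr ⟨hw.1, chain'_invRev (chain'_toWord c), ?_⟩
            intro p hp q hq
            rw [hD, invRev_concat] at hq
            have hq' : (x.1, !x.2) = q := by simpa using hq
            subst hq'
            have hpx : p ≠ x := by
              intro hcon
              subst hcon
              exact hback (by simpa using hp)
            simp only [NC, Bool.not_not]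
            rw [← Prod.ext_iff]
            exact hpx
          · intro p hp q hq
            rw [hD, List.getLast?_concat] at hp
            have hp' : x = p := by simpa using hp
            subst hp'
            have hq' : h = q := by
              have : ((h :: t) ++ invRev c.toWord).head? = some h := by simp
              rw [this] at hq
              simpa using hq
            subst hq'
            intro hcon
            apply hfront
            obtain ⟨h1, h2⟩ := hcon
            have : h.2 = !x.2 := by
              cases hx2 : x.2 <;> cases hh2 : h.2 <;> simp_all
            exact Prod.ext h1.symm this
        rw [hbig, List.append_assoc, toWord_mk_eq hch]
        simp only [List.length_append, List.length_cons, invRev_length]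
        omega

lemma getLast?_cons_replicate {β : Type*} (k : ℕ) (x : β) :
    ∀ a : β, (a :: List.replicate k x).getLast? = some (if k = 0 then a else x) := by
  induction k with
  | zero => intro a; rfl
  | succ k ih =>
    intro a
    rw [List.replicate_succ, List.getLast?_cons_cons, ih x]
    simp

lemma chain'_cons_replicate {α : Type*} (k : ℕ) {a x : α × Bool} (hax : NC a x)
    (hxx : NC x x) : (a :: List.replicate k x).Chain' NC := by
  induction k generalizing a with
  | zero => exact List.isChain_singleton _
  | succ k ih =>
    rw [List.replicate_succ]
    exact List.isChain_cons_cons.mpr ⟨hax, ih hxx⟩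

def wd (k m : ℕ) (b1 b2 : Bool) : List (Fin 2 × Bool) :=
  ((0, true) :: List.replicate k (1, b1)) ++ ((0, true) :: List.replicate m (1, b2))

lemma nc01 (b c : Bool) : NC ((0 : Fin 2), b) ((1 : Fin 2), c) := by simp [NC]
lemma nc10 (b c : Bool) : NC ((1 : Fin 2), b) ((0 : Fin 2), c) := by simp [NC]

lemma wd_length (k m : ℕ) (b1 b2 : Bool) : (wd k m b1 b2).length = k + m + 2 := by
  simp [wd]; omega

lemma CRed_wd (k m : ℕ) (b1 b2 : Bool) : CRed (wd k m b1 b2) := by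
  constructor
  · refine List.isChain_append.mpr ⟨chain'_cons_replicate k (nc01 _ _) (NC_self _),
      chain'_cons_replicate m (nc01 _ _) (NC_self _), ?_⟩
    intro p hp q hq
    have hq' : ((0 : Fin 2), true) = q := by simpa using hq
    subst hq'
    rw [getLast?_cons_replicate] at hp
    have hp' : (if k = 0 then ((0 : Fin 2), true) else ((1 : Fin 2), b1)) = p := by
      simpa using hp
    subst hp'
    split
    · exact NC_self _
    · exact nc10 _ _
  · intro p hp q hq
    have hq' : ((0 : Fin 2), true) = q := by simpa [wd] using hq
    subst hq'
    rw [wd, List.getLast?_append_cons, getLast?_cons_replicate] at hp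
    have hp' : (if m = 0 then ((0 : Fin 2), true) else ((1 : Fin 2), b2)) = p := by
      simpa using hp
    subst hp'
    split
    · exact NC_self _
    · exact nc10 _ _

lemma tau2_of0 (b : Bool) :
    tau2 b (FreeGroup.of (0 : Fin 2)) = FreeGroup.of 0 * lett ((1 : Fin 2), b) := by
  rw [tau2, wmap, FreeGroup.lift_apply_of]
  norm_num

lemma tau2_of1 (b : Bool) : tau2 b (FreeGroup.of (1 : Fin 2)) = FreeGroup.of 1 := by
  rw [tau2, wmap, FreeGroup.lift_apply_of]
  norm_num

/-- `elt ℓ k = x₁ x₂^{-k} x₁ x₂^{-k} x₂^ℓ`. -/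
def elt (ℓ k : ℕ) : FG 2 :=
  FreeGroup.of 0 * ((FreeGroup.of (1 : Fin 2))⁻¹) ^ k * FreeGroup.of 0 *
    (((FreeGroup.of (1 : Fin 2))⁻¹) ^ k * (FreeGroup.of 1) ^ ℓ)

lemma tau2_false_elt (ℓ k : ℕ) : tau2 false (elt ℓ k) = elt ℓ (k + 1) := by
  simp only [elt, _root_.map_mul, _root_.map_pow, _root_.map_inv, tau2_of0, tau2_of1]
  rw [show lett ((1 : Fin 2), false) = (FreeGroup.of (1 : Fin 2))⁻¹ from rfl]
  group

lemma iter_tau2_false (ℓ k : ℕ) :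
    (⇑(tau2 false))^[k] (elt ℓ 0) = elt ℓ k := by
  induction k with
  | zero => rfl
  | succ k ih => rw [Function.iterate_succ_apply', ih, tau2_false_elt]

lemma elt_zero (ℓ : ℕ) :
    elt ℓ 0 = (FreeGroup.of (0 : Fin 2)) ^ 2 * (FreeGroup.of (1 : Fin 2)) ^ ℓ := by
  simp [elt, sq]

lemma tau2_true_elt0 (ℓ : ℕ) :
    tau2 true (elt ℓ 0) =
      FreeGroup.of (0 : Fin 2) * FreeGroup.of (1 : Fin 2) * FreeGroup.of 0 *
        (FreeGroup.of (1 : Fin 2)) ^ (ℓ + 1) := by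
  simp only [elt, _root_.map_mul, _root_.map_pow, _root_.map_inv, tau2_of0, tau2_of1]
  rw [show lett ((1 : Fin 2), true) = FreeGroup.of (1 : Fin 2) from rfl]
  group

lemma mk_single_pow (x : Fin 2 × Bool) (k : ℕ) :
    (FreeGroup.mk [x]) ^ k = FreeGroup.mk (List.replicate k x) := by
  induction k with
  | zero => rfl
  | succ k ih => rw [pow_succ, ih, mul_mk, ← List.replicate_succ']

lemma of0_eq : (FreeGroup.of (0 : Fin 2)) = FreeGroup.mk [((0 : Fin 2), true)] := rfl
lemma of1_eq : (FreeGroup.of (1 : Fin 2)) = FreeGroup.mk [((1 : Fin 2), true)] := rfl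
lemma of1_inv_eq : (FreeGroup.of (1 : Fin 2))⁻¹ = FreeGroup.mk [((1 : Fin 2), false)] := by
  rw [of1_eq, inv_mk]; rfl

lemma elt_eq_wd {ℓ k : ℕ} (hk : k ≤ ℓ) : elt ℓ k = FreeGroup.mk (wd k (ℓ - k) false true) := by
  have h1 : ((FreeGroup.of (1 : Fin 2))⁻¹) ^ k * (FreeGroup.of 1) ^ ℓ
      = (FreeGroup.of (1 : Fin 2)) ^ (ℓ - k) := by
    have : (FreeGroup.of (1 : Fin 2)) ^ ℓ
        = (FreeGroup.of (1 : Fin 2)) ^ k * (FreeGroup.of (1 : Fin 2)) ^ (ℓ - k) := by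
      rw [← pow_add]; congr 1; omega
    rw [this, inv_pow, inv_mul_cancel_left]
  rw [elt, h1, of0_eq, of1_inv_eq, of1_eq, mk_single_pow, mk_single_pow, mul_mk, mul_mk, mul_mk]
  congr 1
  simp [wd]

lemma elt_succ_eq_wd (ℓ : ℕ) : elt ℓ (ℓ + 1) = FreeGroup.mk (wd (ℓ + 1) 1 false false) := by
  have h1 : ((FreeGroup.of (1 : Fin 2))⁻¹) ^ (ℓ + 1) * (FreeGroup.of 1) ^ ℓ
      = (FreeGroup.of (1 : Fin 2))⁻¹ := by
    rw [pow_succ', mul_assoc, inv_pow, inv_mul_cancel, mul_one]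
  rw [elt, h1, of0_eq, of1_inv_eq, mk_single_pow, mul_mk, mul_mk, mul_mk]
  congr 1
  simp [wd]

lemma true_word_eq_wd (ℓ : ℕ) :
    FreeGroup.of (0 : Fin 2) * FreeGroup.of (1 : Fin 2) * FreeGroup.of 0 *
      (FreeGroup.of (1 : Fin 2)) ^ (ℓ + 1) = FreeGroup.mk (wd 1 (ℓ + 1) true true) := by
  rw [of0_eq, of1_eq, mk_single_pow, mul_mk, mul_mk, mul_mk]
  exact congrArg _ (by simp [wd])

-- abelianization invariant
def phi : FG 2 →* Multiplicative ℤ :=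
  FreeGroup.lift (fun i => Multiplicative.ofAdd (if i = 0 then 0 else 1))

lemma phi_elt (ℓ k : ℕ) : (phi (elt ℓ k)).toAdd = (ℓ : ℤ) - 2 * k := by
  have h0 : phi (FreeGroup.of (0 : Fin 2)) = Multiplicative.ofAdd 0 := by
    rw [phi, FreeGroup.lift_apply_of]; norm_num
  have h1 : phi (FreeGroup.of (1 : Fin 2)) = Multiplicative.ofAdd 1 := by
    rw [phi, FreeGroup.lift_apply_of]; norm_num
  simp only [elt, _root_.map_mul, _root_.map_pow, _root_.map_inv, h0, h1,
    toAdd_mul, toAdd_pow, toAdd_inv, toAdd_ofAdd]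
  ring

lemma mk_elt_inj {ℓ : ℕ} : Function.Injective (fun k => ConjClasses.mk (elt ℓ k)) := by
  intro k k' h
  simp only at h
  obtain ⟨c, hc⟩ := isConj_iff.mp (ConjClasses.mk_eq_mk_iff_isConj.mp h)
  have h2 := congrArg phi hc
  rw [_root_.map_mul, _root_.map_mul, _root_.map_inv, mul_comm (phi c),
    mul_inv_cancel_right] at h2
  have h3 := congrArg Multiplicative.toAdd h2
  rw [phi_elt, phi_elt] at h3
  omega

lemma conjmap_mk (f : FG 2 →* FG 2) (g : FG 2) :
    ConjClasses.map f (ConjClasses.mk g) = ConjClasses.mk (f g) := rfl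

lemma conjmap_iter (f : FG 2 →* FG 2) (k : ℕ) (g : FG 2) :
    (ConjClasses.map f)^[k] (ConjClasses.mk g) = ConjClasses.mk ((⇑f)^[k] g) := by
  induction k generalizing g with
  | zero => rfl
  | succ k ih =>
    rw [Function.iterate_succ_apply, Function.iterate_succ_apply, conjmap_mk, ih]


lemma cwLen_mk_eq {L : List (Fin 2 × Bool)} (h : CRed L) :
    cwLen (ConjClasses.mk (FreeGroup.mk L)) = L.length := by
  apply _root_.le_antisymm
  · apply Nat.sInf_le
    exact ⟨FreeGroup.mk L, rfl, by rw [wlen, toWord_mk_eq h.1]⟩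
  · apply le_csInf
    · exact ⟨wlen (FreeGroup.mk L), ⟨FreeGroup.mk L, rfl, rfl⟩⟩
    · rintro b ⟨g, hg, rfl⟩
      obtain ⟨c, hc⟩ := isConj_iff.mp (ConjClasses.mk_eq_mk_iff_isConj.mp hg.symm)
      rw [wlen, ← hc]
      exact conj_ge c.toWord.length c L rfl h

end AuxWhitehead

/-- For `u = x_1^2 x_2^ℓ` (`ℓ ≥ 1`), the set `Λ(u)` has cardinality `|u| - 1 = ℓ + 1`. -/
theorem Lam_card_x1sq_x2pow (ℓ : ℕ) (hl : 1 ≤ ℓ) (u : CW 2)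
    (hu : u = ConjClasses.mk
      ((FreeGroup.of (0 : Fin 2)) ^ 2 * (FreeGroup.of (1 : Fin 2)) ^ ℓ)) :
    (Lam u).ncard = cwLen u - 1 ∧ cwLen u - 1 = ℓ + 1 := by

  have hu0 : u = ConjClasses.mk (elt ℓ 0) := by rw [hu, elt_zero]
  have hlen : ∀ k, k ≤ ℓ → cwLen (ConjClasses.mk (elt ℓ k)) = ℓ + 2 := by
    intro k hk
    rw [elt_eq_wd hk, cwLen_mk_eq (CRed_wd _ _ _ _), wd_length]
    omega
  have hcwu : cwLen u = ℓ + 2 := by rw [hu0]; exact hlen 0 (by omega)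
  have hLam : Lam u = (fun k => ConjClasses.mk (elt ℓ k)) '' Set.Iic ℓ := by
    ext v
    constructor
    · rintro ⟨b, k, rfl, hcond⟩
      cases b with
      | false =>
        by_cases hk : k ≤ ℓ
        · exact ⟨k, hk, by rw [hu0, conjmap_iter, iter_tau2_false]⟩
        · exfalso
          have hbad := hcond (ℓ + 1) (by omega) (by omega)
          rw [hu0, conjmap_iter, iter_tau2_false, elt_succ_eq_wd,
            cwLen_mk_eq (CRed_wd _ _ _ _), wd_length, hlen 0 (Nat.zero_le ℓ)] at hbad
          omega
      | true =>
        rcases Nat.eq_zero_or_pos k with hk | hk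
        · subst hk
          exact ⟨0, by simp, by simp [hu0]⟩
        · exfalso
          have hbad := hcond 1 le_rfl hk
          rw [hu0, conjmap_iter] at hbad
          rw [show (⇑(tau2 true))^[1] (elt ℓ 0) = tau2 true (elt ℓ 0) from rfl] at hbad
          rw [tau2_true_elt0, true_word_eq_wd, cwLen_mk_eq (CRed_wd _ _ _ _),
            wd_length, hlen 0 (Nat.zero_le ℓ)] at hbad
          omega
    · rintro ⟨k, hk, rfl⟩
      refine ⟨false, k, by rw [hu0, conjmap_iter, iter_tau2_false], ?_⟩
      intro i hi1 hik
      rw [hu0, conjmap_iter, iter_tau2_false, hlen i (le_trans hik hk), hlen 0 (Nat.zero_le ℓ)]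
  refine ⟨?_, by omega⟩
  rw [hLam, Set.ncard_image_of_injective _ mk_elt_inj, hcwu,
    ← Finset.coe_Iic, Set.ncard_coe_finset, Nat.card_Iic]
  omega
end

section
/- Let u = x_1 x_2^{ℓ_1} x_1^{-1} x_2^{ℓ_2} be the cyclic word in F_2 with ℓ_1, ℓ_2 ≥ 1 and ℓ_1 ≠ ℓ_2 (so that u is cyclically reduced). Then the set Λ(u) has cardinality 1, i.e. Λ(u) = {u}. -/
lemma tau2_fix (b : Bool) (ℓ₁ ℓ₂ : ℕ) :
    tau2 b (FreeGroup.of (0 : Fin 2) * (FreeGroup.of (1 : Fin 2)) ^ ℓ₁ *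
        (FreeGroup.of (0 : Fin 2))⁻¹ * (FreeGroup.of (1 : Fin 2)) ^ ℓ₂) =
    FreeGroup.of (0 : Fin 2) * (FreeGroup.of (1 : Fin 2)) ^ ℓ₁ *
        (FreeGroup.of (0 : Fin 2))⁻¹ * (FreeGroup.of (1 : Fin 2)) ^ ℓ₂ := by
  have h0 : tau2 b (FreeGroup.of (0 : Fin 2)) =
      FreeGroup.of (0 : Fin 2) * lett ((1 : Fin 2), b) := by
    simp [tau2, wmap, FreeGroup.lift_apply_of]
  have h1 : tau2 b (FreeGroup.of (1 : Fin 2)) = FreeGroup.of (1 : Fin 2) := by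
    simp [tau2, wmap, FreeGroup.lift_apply_of]
  simp only [map_mul, map_pow, map_inv, h0, h1]
  cases b <;> simp only [lett, cond_true, cond_false] <;> group

/-- For `u = x_1 x_2^{ℓ_1} x_1⁻¹ x_2^{ℓ_2}` (`ℓ_1, ℓ_2 ≥ 1`, `ℓ_1 ≠ ℓ_2`), `Λ(u) = {u}`. -/
theorem Lam_eq_singleton_conj_word (ℓ₁ ℓ₂ : ℕ) (h1 : 1 ≤ ℓ₁) (h2 : 1 ≤ ℓ₂)
    (hne : ℓ₁ ≠ ℓ₂) (u : CW 2)
    (hu : u = ConjClasses.mk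
      (FreeGroup.of (0 : Fin 2) * (FreeGroup.of (1 : Fin 2)) ^ ℓ₁ *
        (FreeGroup.of (0 : Fin 2))⁻¹ * (FreeGroup.of (1 : Fin 2)) ^ ℓ₂)) :
    Lam u = {u} := by
  have hfix : ∀ b : Bool, ConjClasses.map (tau2 b) u = u := by
    intro b
    rw [hu]; show ConjClasses.mk (tau2 b _) = _; rw [tau2_fix]
  ext v
  simp only [Lam, Set.mem_setOf_eq, Set.mem_singleton_iff]
  constructor
  · rintro ⟨b, k, rfl, -⟩
    exact Function.iterate_fixed (hfix b) k
  · rintro rfl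
    exact ⟨true, 0, rfl, fun i hi hi' => absurd (hi.trans hi') (by norm_num)⟩
end
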